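/- Let N ≥ 1, let b ≥ 0 be an integer, and let e_1, …, e_N be nonnegative integers with e_1 ≥ 1. Define coefficient functions β̂^n by β̂^n = Σ_{k=1}^{n−1} e_k β^{n−k} for 2 ≤ n ≤ N+1, and β̂^n = Σ_{k=1}^{n−N−1} b β^k + Σ_{k=1}^N e_k β^{n−k} for n ≥ N+2. Suppose Q : {1,2,…} → ℕ satisfies Q_1 = 1 and Q_n = 1 + Σ_k β̂^n_k Q_k for all n ≥ 2. Then for all n ≥ N+2, the identity Q_n = (e_1 + 1) Q_{n−1} + Σ_{k=2}^N (e_k − e_{k−1}) Q_{n−k} + (b − e_N) Q_{n−N−1} holds in the integers. -/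

import Mathlib

/-- Linear recurrences with negative coefficients from Zeckendorf conditions
with a common tail: if `Q 1 = 1` and
`Q n = 1 + Σ_{k=1}^{n-1} e k * Q (n-k)` for `2 ≤ n ≤ N+1`, while
`Q n = 1 + Σ_{k=1}^{n-N-1} b * Q k + Σ_{k=1}^{N} e k * Q (n-k)` for `n ≥ N+2`,
then `Q n = (e 1 + 1) Q (n-1) + Σ_{k=2}^{N} (e k - e (k-1)) Q (n-k)
+ (b - e N) Q (n-N-1)` in the integers for all `n ≥ N+2`. -/
theorem short_recurrence_with_negative_coefficients (N : ℕ) (hN : 1 ≤ N)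
    (b : ℕ) (e : ℕ → ℕ) (he1 : 1 ≤ e 1) (Q : ℕ → ℕ) (hQ1 : Q 1 = 1)
    (hrec1 : ∀ n, 2 ≤ n → n ≤ N + 1 →
      Q n = 1 + ∑ k ∈ Finset.Icc 1 (n - 1), e k * Q (n - k))
    (hrec2 : ∀ n, N + 2 ≤ n →
      Q n = 1 + (∑ k ∈ Finset.Icc 1 (n - N - 1), b * Q k) +
        ∑ k ∈ Finset.Icc 1 N, e k * Q (n - k)) :
    ∀ n, N + 2 ≤ n →
      (Q n : ℤ) = ((e 1 : ℤ) + 1) * Q (n - 1) +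
        (∑ k ∈ Finset.Icc 2 N, ((e k : ℤ) - (e (k - 1) : ℤ)) * Q (n - k)) +
        ((b : ℤ) - (e N : ℤ)) * Q (n - N - 1) := by
  have h : ∀ n, N + 1 ≤ n → (Q n : ℤ) =
      1 + (∑ k ∈ Finset.Icc 1 (n - N - 1), (b : ℤ) * Q k) +
        ∑ k ∈ Finset.Icc 1 N, (e k : ℤ) * Q (n - k) := by
    intro n hn
    rcases eq_or_lt_of_le hn with h1 | h1
    · subst h1
      have h2 := hrec1 (N + 1) (by omega) (by omega)
      have h3 : N + 1 - N - 1 = 0 := by omega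
      have h4 : N + 1 - 1 = N := by omega
      rw [h3, h4] at *
      simp only [Finset.Icc_eq_empty_of_lt (by norm_num : (0:ℕ) < 1), Finset.sum_empty]
      rw [h2]
      push_cast
      ring
    · rw [hrec2 n (by omega)]
      push_cast
      ring
  intro n hn
  have hq := h n (by omega)
  have hq' : (Q (n-1) : ℤ) = 1 + (∑ k ∈ Finset.Icc 1 (n - N - 2), (b : ℤ) * Q k) +
      ∑ k ∈ Finset.Icc 1 N, (e k : ℤ) * Q (n - 1 - k) := by
    have h5 := h (n-1) (by omega)
    have h6 : n - 1 - N - 1 = n - N - 2 := by omega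
    rw [h6] at h5
    exact h5
  have hS : (∑ k ∈ Finset.Icc 1 (n - N - 1), (b : ℤ) * Q k) =
      (∑ k ∈ Finset.Icc 1 (n - N - 2), (b : ℤ) * Q k) + (b : ℤ) * Q (n - N - 1) := by
    have h7 : n - N - 1 = (n - N - 2) + 1 := by omega
    rw [h7, Finset.sum_Icc_succ_top (by omega : 1 ≤ n - N - 2 + 1)]
  have hA : (∑ k ∈ Finset.Icc 1 N, (e k : ℤ) * Q (n - k)) =
      (e 1 : ℤ) * Q (n - 1) + ∑ i ∈ Finset.range (N-1), (e (i+2) : ℤ) * Q (n - 2 - i) := by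
    rw [← Finset.Ico_add_one_right_eq_Icc, Finset.sum_Ico_eq_sum_range,
      (by omega : N + 1 - 1 = (N - 1) + 1), Finset.sum_range_succ', add_comm]
    congr 1
    apply Finset.sum_congr rfl
    intro i _
    rw [show 1 + (i + 1) = i + 2 by omega, show n - (i + 2) = n - 2 - i by omega]
  have hB : (∑ k ∈ Finset.Icc 1 N, (e k : ℤ) * Q (n - 1 - k)) =
      (∑ i ∈ Finset.range (N-1), (e (i+1) : ℤ) * Q (n - 2 - i)) + (e N : ℤ) * Q (n - N - 1) := by
    rw [← Finset.Ico_add_one_right_eq_Icc, Finset.sum_Ico_eq_sum_range,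
      (by omega : N + 1 - 1 = (N - 1) + 1), Finset.sum_range_succ]
    congr 1
    · apply Finset.sum_congr rfl
      intro i _
      rw [show 1 + i = i + 1 by omega, show n - 1 - (i + 1) = n - 2 - i by omega]
    · rw [show 1 + (N - 1) = N by omega, show n - 1 - N = n - N - 1 by omega]
  have hC : (∑ k ∈ Finset.Icc 2 N, ((e k : ℤ) - (e (k - 1) : ℤ)) * Q (n - k)) =
      (∑ i ∈ Finset.range (N-1), (e (i+2) : ℤ) * Q (n - 2 - i)) -
      ∑ i ∈ Finset.range (N-1), (e (i+1) : ℤ) * Q (n - 2 - i) := by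
    rw [← Finset.sum_sub_distrib, ← Finset.Ico_add_one_right_eq_Icc, Finset.sum_Ico_eq_sum_range,
      (by omega : N + 1 - 2 = N - 1)]
    apply Finset.sum_congr rfl
    intro i _
    rw [show 2 + i = i + 2 by omega, show i + 2 - 1 = i + 1 by omega,
      show n - (i + 2) = n - 2 - i by omega]
    ring
  rw [hq, hS, hA, hC]
  linear_combination -hq' - hB
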